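/- No integer of the form p + 2^k, where p is prime and k is a natural number, is congruent to 992077 modulo 11184810. -/
import Mathlib

lemma key (q p : ℕ) (hp : p.Prime) (hq : q.Prime) (c : ZMod 11184810)
    (hqN : q ∣ 11184810)
    (h : (p : ZMod 11184810) = c)
    (hc : ZMod.castHom hqN (ZMod q) c = 0)
    (hne : (q : ZMod 11184810) ≠ c) : False := by
  haveI : NeZero q := ⟨hq.pos.ne'⟩
  have h1 : (p : ZMod q) = 0 := by
    have h2 := congrArg (ZMod.castHom hqN (ZMod q)) h
    rwa [map_natCast, hc] at h2
  have h2 : q ∣ p := (ZMod.natCast_eq_zero_iff p q).mp h1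
  have h3 : q = p := (Nat.prime_dvd_prime_iff_eq hq hp).mp h2
  exact hne (h3 ▸ h)

lemma two_pow_per (q r : ℕ) : (2 : ZMod 11184810) ^ (1 + 24 * q + r) = 2 ^ (1 + r) := by
  induction q with
  | zero => simp
  | succ n ih =>
    have he : 1 + 24 * (n + 1) + r = 24 + (1 + 24 * n + r) := by ring
    have h25 : (2 : ZMod 11184810) ^ 25 = 2 := by decide
    calc (2 : ZMod 11184810) ^ (1 + 24 * (n + 1) + r)
        = 2 ^ 24 * 2 ^ (1 + 24 * n + r) := by rw [he, pow_add]
      _ = 2 ^ 24 * 2 ^ (1 + r) := by rw [ih]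
      _ = 2 ^ 25 * 2 ^ r := by
            rw [← pow_add, ← pow_add, show 24 + (1 + r) = 25 + r by omega]
      _ = 2 ^ (1 + r) := by rw [h25, ← pow_succ', show r + 1 = 1 + r by omega]

theorem chen_progression_one_avoids (p : ℕ) (hp : p.Prime) (k : ℕ) :
    ¬ ((p : ℤ) + 2 ^ k ≡ 992077 [ZMOD 11184810]) := by
  intro h
  have h0 := (ZMod.intCast_eq_intCast_iff _ _ 11184810).mpr h
  push_cast at h0
  rcases k with _ | j
  · -- k = 0
    have h2 : (p : ZMod 11184810) + 2 ^ 0 = 992077 := h0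
    exact key 3 p hp (by norm_num) _ (by norm_num) (eq_sub_of_add_eq h2) (by decide) (by decide)
  · -- k = j + 1
    have hj : j + 1 = 1 + 24 * (j / 24) + j % 24 := by omega
    have h1 : (2 : ZMod 11184810) ^ (j + 1) = 2 ^ (1 + j % 24) := by
      rw [hj, two_pow_per]
    rw [h1] at h0
    have hm : j % 24 < 24 := Nat.mod_lt _ (by norm_num)
    interval_cases h : (j % 24)
    · exact key 5 p hp (by norm_num) _ (by norm_num) (eq_sub_of_add_eq h0) (by decide) (by decide)
    · exact key 3 p hp (by norm_num) _ (by norm_num) (eq_sub_of_add_eq h0) (by decide) (by decide)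
    · exact key 13 p hp (by norm_num) _ (by norm_num) (eq_sub_of_add_eq h0) (by decide) (by decide)
    · exact key 3 p hp (by norm_num) _ (by norm_num) (eq_sub_of_add_eq h0) (by decide) (by decide)
    · exact key 5 p hp (by norm_num) _ (by norm_num) (eq_sub_of_add_eq h0) (by decide) (by decide)
    · exact key 3 p hp (by norm_num) _ (by norm_num) (eq_sub_of_add_eq h0) (by decide) (by decide)
    · exact key 7 p hp (by norm_num) _ (by norm_num) (eq_sub_of_add_eq h0) (by decide) (by decide)
    · exact key 3 p hp (by norm_num) _ (by norm_num) (eq_sub_of_add_eq h0) (by decide) (by decide)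
    · exact key 5 p hp (by norm_num) _ (by norm_num) (eq_sub_of_add_eq h0) (by decide) (by decide)
    · exact key 3 p hp (by norm_num) _ (by norm_num) (eq_sub_of_add_eq h0) (by decide) (by decide)
    · exact key 17 p hp (by norm_num) _ (by norm_num) (eq_sub_of_add_eq h0) (by decide) (by decide)
    · exact key 3 p hp (by norm_num) _ (by norm_num) (eq_sub_of_add_eq h0) (by decide) (by decide)
    · exact key 5 p hp (by norm_num) _ (by norm_num) (eq_sub_of_add_eq h0) (by decide) (by decide)
    · exact key 3 p hp (by norm_num) _ (by norm_num) (eq_sub_of_add_eq h0) (by decide) (by decide)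
    · exact key 13 p hp (by norm_num) _ (by norm_num) (eq_sub_of_add_eq h0) (by decide) (by decide)
    · exact key 3 p hp (by norm_num) _ (by norm_num) (eq_sub_of_add_eq h0) (by decide) (by decide)
    · exact key 5 p hp (by norm_num) _ (by norm_num) (eq_sub_of_add_eq h0) (by decide) (by decide)
    · exact key 3 p hp (by norm_num) _ (by norm_num) (eq_sub_of_add_eq h0) (by decide) (by decide)
    · exact key 7 p hp (by norm_num) _ (by norm_num) (eq_sub_of_add_eq h0) (by decide) (by decide)
    · exact key 3 p hp (by norm_num) _ (by norm_num) (eq_sub_of_add_eq h0) (by decide) (by decide)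
    · exact key 5 p hp (by norm_num) _ (by norm_num) (eq_sub_of_add_eq h0) (by decide) (by decide)
    · exact key 3 p hp (by norm_num) _ (by norm_num) (eq_sub_of_add_eq h0) (by decide) (by decide)
    · exact key 241 p hp (by norm_num) _ (by norm_num) (eq_sub_of_add_eq h0) (by decide) (by decide)
    · exact key 3 p hp (by norm_num) _ (by norm_num) (eq_sub_of_add_eq h0) (by decide) (by decide)
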